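/- In every DP-chain, the ternary discriminator is definable: the term t(x,y,z) := (Δ(x ↔ y) ∧ z) ∨ (¬Δ(x ↔ y) ∧ x), with Δu := u * u and u ↔ v := (u ⇒ v) ∧ (v ⇒ u), satisfies t(x,x,z) = z and t(x,y,z) = x whenever x ≠ y. -/
import Mathlib


/-- A DP-chain: an MTL-chain (linearly ordered, bounded, integral, commutative
residuated lattice) with a coatom, in which `x * x = 0` for all `x < 1`. -/
structure DPChain (α : Type*) [LinearOrder α] [Zero α] [One α] where
  zero_le : ∀ x : α, 0 ≤ x
  le_one : ∀ x : α, x ≤ 1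
  mul : α → α → α
  imp : α → α → α
  mul_comm : ∀ x y, mul x y = mul y x
  mul_assoc : ∀ x y z, mul (mul x y) z = mul x (mul y z)
  mul_one : ∀ x, mul x 1 = x
  mul_le_mul : ∀ x y z : α, x ≤ y → mul x z ≤ mul y z
  residuation : ∀ x y z : α, mul x y ≤ z ↔ x ≤ imp y z
  coatom : α
  coatom_lt_one : coatom < 1
  le_coatom : ∀ x : α, x < 1 → x ≤ coatom
  mul_self_eq_zero : ∀ x : α, x < 1 → mul x x = 0

/-- The biimplication `u ↔ v` in a DP-chain. -/
def DPChain.biimp {α : Type*} [LinearOrder α] [Zero α] [One α]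
    (M : DPChain α) (u v : α) : α := min (M.imp u v) (M.imp v u)

/-- The Baaz Delta `Δu = u * u` in a DP-chain. -/
def DPChain.delta {α : Type*} [LinearOrder α] [Zero α] [One α]
    (M : DPChain α) (u : α) : α := M.mul u u

/-- The candidate discriminator term
`t(x,y,z) = (Δ(x ↔ y) ∧ z) ∨ (¬Δ(x ↔ y) ∧ x)`. -/
def DPChain.disc {α : Type*} [LinearOrder α] [Zero α] [One α]
    (M : DPChain α) (x y z : α) : α :=
  max (min (M.delta (M.biimp x y)) z) (min (M.imp (M.delta (M.biimp x y)) 0) x)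

section
variable {α : Type*} [LinearOrder α] [Zero α] [One α] (M : DPChain α)

lemma DPChain.one_mul' (x : α) : M.mul 1 x = x := by rw [M.mul_comm, M.mul_one]

lemma DPChain.imp_self (x : α) : M.imp x x = 1 := by
  have h : (1 : α) ≤ M.imp x x := (M.residuation 1 x x).1 (le_of_eq (M.one_mul' x))
  exact le_antisymm (M.le_one _) h

lemma DPChain.imp_one_zero : M.imp 1 (0:α) = 0 := by
  have h : M.imp 1 (0:α) ≤ 0 := by
    have := (M.residuation (M.imp 1 0) 1 0).2 le_rfl
    rwa [M.mul_one] at this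
  exact le_antisymm h (M.zero_le _)

lemma DPChain.imp_zero_zero : M.imp 0 (0:α) = 1 := by
  have h : (1:α) ≤ M.imp 0 0 := (M.residuation 1 0 0).1 (by
    rw [M.one_mul'])
  exact le_antisymm (M.le_one _) h

lemma DPChain.imp_lt_one {x y : α} (h : y < x) : M.imp x y < 1 := by
  rcases lt_or_ge (M.imp x y) 1 with h1 | h1
  · exact h1
  · exfalso
    have := (M.residuation 1 x y).2 (le_trans h1 le_rfl)
    rw [M.one_mul'] at this
    exact absurd this (not_le_of_gt h)
end

/-- In every DP-chain the ternary discriminator is definable. -/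
theorem dpChain_discriminator {α : Type*} [LinearOrder α] [Zero α] [One α]
    (M : DPChain α) :
    ∀ x y z : α, M.disc x x z = z ∧ (x ≠ y → M.disc x y z = x) := by
  intro x y z
  constructor
  · simp only [DPChain.disc, DPChain.biimp, DPChain.delta, M.imp_self, min_self,
      M.mul_one, M.imp_one_zero]
    rw [min_eq_left (M.zero_le x), min_eq_right (M.le_one z), max_eq_left (M.zero_le z)]
  · intro hxy
    have hb : M.biimp x y < 1 := by
      rcases lt_or_gt_of_ne hxy with h | h
      · exact lt_of_le_of_lt (min_le_right _ _) (M.imp_lt_one h)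
      · exact lt_of_le_of_lt (min_le_left _ _) (M.imp_lt_one h)
    simp only [DPChain.disc, DPChain.delta, M.mul_self_eq_zero _ hb, M.imp_zero_zero]
    rw [min_eq_left (M.zero_le z), min_eq_right (M.le_one x), max_eq_right (M.zero_le x)]
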